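/- Let f : ℕ → ℕ. Suppose that for every domain X' and every binary concept class H ⊆ {0,1}^{X'} with finite VC dimension d, there exists an exact realizable sample compression scheme for H of size at most f(d). Then there is a universal constant c > 0 such that for every class C ⊆ [0,1]^X with finite pseudo-dimension d_P and every ε ∈ (0,1): (i) there exists an ε-approximate realizable compression scheme for C with respect to the ℓ_∞ loss of size at most c·f(d_P)·(1 + log₂(1/ε)); and (ii) for every p ∈ [1,∞), there exists an ε-approximate realizable compression scheme for C with respect to the ℓ_p loss of size at most c·f(d_P)·(1 + (1/p)·log₂(1/ε)). -/

import Mathlib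

universe u

/-- A finite sample `S` is realizable by the concept class `C`. -/
def Realizable {X Y : Type*} (C : Set (X → Y)) (S : List (X × Y)) : Prop :=
  ∃ c ∈ C, ∀ p ∈ S, c p.1 = p.2

/-- `(κ, ρ)` is an exact realizable sample compression scheme for `C` of size at most `k`. -/
def IsExactRealizableScheme {X Y : Type*} (C : Set (X → Y)) (k : ℕ)
    (κ : List (X × Y) → List (X × Y) × List Bool)
    (ρ : List (X × Y) × List Bool → X → Y) : Prop :=
  (∀ S : List (X × Y), (κ S).1 ⊆ S) ∧
  (∀ S : List (X × Y), Realizable C S → (κ S).1.length + (κ S).2.length ≤ k) ∧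
  (∀ S : List (X × Y), Realizable C S → ∀ p ∈ S, ρ (κ S) p.1 = p.2)

/-- `n` points of `X` are shattered by the binary concept class `H ⊆ {0,1}^X`. -/
def ShattersN {X : Type*} (H : Set (X → Bool)) (n : ℕ) : Prop :=
  ∃ x : Fin n → X, ∀ b : Fin n → Bool, ∃ h ∈ H, ∀ i, h (x i) = b i

/-- `H` has (finite) VC dimension exactly `d`. -/
def IsVCDim {X : Type*} (H : Set (X → Bool)) (d : ℕ) : Prop :=
  ShattersN H d ∧ ¬ ShattersN H (d + 1)

/-- `n` points of `X` are P-shattered by the real-valued class `C ⊆ [0,1]^X`. -/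
def PShattersN {X : Type*} (C : Set (X → ℝ)) (n : ℕ) : Prop :=
  ∃ (x : Fin n → X) (y : Fin n → ℝ), (∀ i, y i ∈ Set.Icc (0:ℝ) 1) ∧
    ∀ b : Fin n → Bool, ∃ c ∈ C, ∀ i, (c (x i) ≤ y i ↔ b i = true)

/-- `C` has (finite) pseudo-dimension exactly `d`. -/
def IsPseudoDim {X : Type*} (C : Set (X → ℝ)) (d : ℕ) : Prop :=
  PShattersN C d ∧ ¬ PShattersN C (d + 1)

/-- `(κ, ρ)` is an `ε`-approximate realizable compression scheme for `C ⊆ [0,1]^X` with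
respect to the `ℓ_∞` loss, of size at most `k`. -/
def IsApproxLinfScheme {X : Type*} (C : Set (X → ℝ)) (k : ℕ) (ε : ℝ)
    (κ : List (X × ℝ) → List (X × ℝ) × List Bool)
    (ρ : List (X × ℝ) × List Bool → X → ℝ) : Prop :=
  (∀ S : List (X × ℝ), (κ S).1 ⊆ S) ∧
  (∀ T x, ρ T x ∈ Set.Icc (0:ℝ) 1) ∧
  (∀ S : List (X × ℝ), Realizable C S → (κ S).1.length + (κ S).2.length ≤ k) ∧
  (∀ S : List (X × ℝ), Realizable C S → ∀ p ∈ S, |ρ (κ S) p.1 - p.2| ≤ ε)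

/-- `(κ, ρ)` is an `ε`-approximate realizable compression scheme for `C ⊆ [0,1]^X` with
respect to the `ℓ_p` loss, of size at most `k`:
`(1/n) ∑ᵢ |ρ(κ S)(xᵢ) - yᵢ|^p ≤ ε` on every realizable sample. -/
def IsApproxLpScheme {X : Type*} (C : Set (X → ℝ)) (k : ℕ) (p ε : ℝ)
    (κ : List (X × ℝ) → List (X × ℝ) × List Bool)
    (ρ : List (X × ℝ) × List Bool → X → ℝ) : Prop :=
  (∀ S : List (X × ℝ), (κ S).1 ⊆ S) ∧
  (∀ T x, ρ T x ∈ Set.Icc (0:ℝ) 1) ∧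
  (∀ S : List (X × ℝ), Realizable C S → (κ S).1.length + (κ S).2.length ≤ k) ∧
  (∀ S : List (X × ℝ), Realizable C S →
    (S.map (fun q => |ρ (κ S) q.1 - q.2| ^ p)).sum ≤ ε * S.length)

/-- Reducing approximate compression for regression to binary compression: if every
binary class of finite VC dimension `d` has an exact realizable compression scheme of
size at most `f d`, then there is a universal constant `c > 0` such that every class
`C ⊆ [0,1]^X` of finite pseudo-dimension `d_P` admits, for every `ε ∈ (0,1)`, an
`ε`-approximate realizable `ℓ_∞` scheme of size at most `c·f(d_P)·(1 + log₂(1/ε))` and,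
for every `p ∈ [1,∞)`, an `ε`-approximate realizable `ℓ_p` scheme of size at most
`c·f(d_P)·(1 + (1/p)·log₂(1/ε))`. -/
def natToBits : ℕ → ℕ → List Bool
  | 0, _ => []
  | B+1, t => (t % 2 == 1) :: natToBits B (t / 2)

def natFromBits : List Bool → ℕ
  | [] => 0
  | b :: l => (if b then 1 else 0) + 2 * natFromBits l

lemma length_natToBits (B t : ℕ) : (natToBits B t).length = B := by
  induction B generalizing t with
  | zero => rfl
  | succ B ih => simp [natToBits, ih]

lemma natFromBits_natToBits (B t : ℕ) (h : t < 2 ^ B) :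
    natFromBits (natToBits B t) = t := by
  induction B generalizing t with
  | zero => simp at h; simp [h, natToBits, natFromBits]
  | succ B ih =>
      have h2 : t / 2 < 2 ^ B := by
        rw [Nat.div_lt_iff_lt_mul (by norm_num)]
        rw [pow_succ] at h; omega
      simp only [natToBits, natFromBits, ih _ h2]
      rcases Nat.mod_two_eq_zero_or_one t with h1 | h1 <;> simp [h1] <;> omega

lemma blocks_extract {α : Type*} (B : ℕ) (g : α → List Bool) (hg : ∀ a, (g a).length = B) :
    ∀ (w : List α) (rest : List Bool) (i : ℕ) (hi : i < w.length),
      ((w.flatMap g ++ rest).drop (i * B)).take B = g w[i] := by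
  intro w
  induction w with
  | nil => intro rest i hi; simp at hi
  | cons a w ih =>
      intro rest i hi
      cases i with
      | zero =>
          simp only [List.flatMap_cons, List.append_assoc, Nat.zero_mul, List.drop_zero]
          rw [← hg a, List.take_left]
          rfl
      | succ i =>
          have : (i + 1) * B = (g a).length + i * B := by rw [hg a]; ring
          rw [List.flatMap_cons, List.append_assoc, this, List.drop_length_add_append]
          exact ih rest i (by simpa using hi)

lemma length_flatMap_const {α : Type*} (B : ℕ) (g : α → List Bool) (hg : ∀ a, (g a).length = B)
    (w : List α) : (w.flatMap g).length = w.length * B := by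
  induction w with
  | nil => simp
  | cons a w ih => simp [List.flatMap_cons, ih, hg a]; ring

lemma drop_blocks {α : Type*} (B : ℕ) (g : α → List Bool) (hg : ∀ a, (g a).length = B)
    (w : List α) (rest : List Bool) :
    (w.flatMap g ++ rest).drop (w.length * B) = rest := by
  rw [← length_flatMap_const B g hg w, List.drop_left]

lemma count_grid (y ε : ℝ) (N : ℕ) (hε : 0 < ε) (hy0 : 0 ≤ y) (hy1 : y ≤ 1)
    (hN : 1 ≤ (N : ℝ) * ε) :
    y - ε ≤ ε * ((Finset.range N).filter (fun t : ℕ => ((t : ℝ) + 1) * ε < y)).card ∧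
    ε * ((Finset.range N).filter (fun t : ℕ => ((t : ℝ) + 1) * ε < y)).card ≤ y := by
  classical
  set K := ⌈y / ε⌉₊ with hK
  have hKN : K ≤ N := by
    rw [hK, Nat.ceil_le, div_le_iff₀ hε]
    calc y ≤ 1 := hy1
    _ ≤ (N : ℝ) * ε := hN
  have hpred : ∀ t : ℕ, (((t : ℝ) + 1) * ε < y ↔ t + 1 < K) := by
    intro t
    rw [hK, Nat.lt_ceil, lt_div_iff₀ hε]
    push_cast
    constructor <;> intro h <;> linarith
  have hfilter : (Finset.range N).filter (fun t : ℕ => ((t : ℝ) + 1) * ε < y)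
      = Finset.range (K - 1) := by
    ext t
    simp only [Finset.mem_filter, Finset.mem_range, hpred]
    omega
  rw [hfilter, Finset.card_range]
  rcases Nat.eq_zero_or_pos K with hK0 | hK1
  · have : y / ε ≤ 0 := by
      by_contra h
      push_neg at h
      have := Nat.ceil_pos.mpr h
      omega
    have hy : y ≤ 0 := by
      rcases le_or_gt y 0 with h | h
      · exact h
      · exfalso; nlinarith [div_pos h hε]
    have : y = 0 := le_antisymm hy hy0
    simp [hK0, this]
    linarith
  · have hcast : ((K - 1 : ℕ) : ℝ) = (K : ℝ) - 1 := by
      push_cast [Nat.cast_sub hK1]; ring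
    constructor
    · have := Nat.le_ceil (y / ε)
      rw [← hK] at this
      have : y ≤ ε * K := by
        rw [div_le_iff₀ hε] at this; linarith
      rw [hcast]; linarith
    · have hlt : ((K - 1 : ℕ) : ℝ) < y / ε := Nat.lt_ceil.mp (by omega)
      rw [lt_div_iff₀ hε] at hlt
      linarith






def ThrClass {X : Type u} (C : Set (X → ℝ)) : Set ((X × ℝ) → Bool) :=
  {h | ∃ c ∈ C, h = fun q : X × ℝ => decide (c q.1 ≤ q.2)}

lemma pshatters_iff_shatters {X : Type u} (C : Set (X → ℝ))
    (hC : ∀ g ∈ C, ∀ x, g x ∈ Set.Icc (0:ℝ) 1) (n : ℕ) :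
    PShattersN C n ↔ ShattersN (ThrClass C) n := by
  constructor
  · rintro ⟨x, y, hy, hb⟩
    refine ⟨fun i => (x i, y i), fun b => ?_⟩
    obtain ⟨c, hc, hci⟩ := hb b
    refine ⟨fun q => decide (c q.1 ≤ q.2), ⟨c, hc, rfl⟩, fun i => ?_⟩
    cases hbi : b i
    · simp only [decide_eq_false_iff_not]
      intro hle
      have := (hci i).mp hle
      rw [hbi] at this
      exact Bool.false_ne_true this
    · simp only [decide_eq_true_eq]
      exact (hci i).mpr hbi
  · rintro ⟨q, hq⟩
    refine ⟨fun i => (q i).1, fun i => (q i).2, fun i => ?_, fun b => ?_⟩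
    · constructor
      · obtain ⟨h, ⟨c, hc, rfl⟩, hval⟩ := hq (fun _ => true)
        have := hval i
        simp only [decide_eq_true_eq] at this
        exact le_trans (hC c hc (q i).1).1 this
      · obtain ⟨h, ⟨c, hc, rfl⟩, hval⟩ := hq (fun _ => false)
        have := hval i
        simp only [decide_eq_false_iff_not, not_le] at this
        exact le_of_lt (lt_of_lt_of_le this (hC c hc (q i).1).2)
    · obtain ⟨h, ⟨c, hc, rfl⟩, hval⟩ := hq b
      refine ⟨c, hc, fun i => ?_⟩
      have := hval i
      have := hval i
      constructor
      · intro hle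
        rw [← this]
        simp [hle]
      · intro hb
        rw [hb] at this
        simpa using this

lemma vc_of_pseudo {X : Type u} (C : Set (X → ℝ))
    (hC : ∀ g ∈ C, ∀ x, g x ∈ Set.Icc (0:ℝ) 1) (d : ℕ) (h : IsPseudoDim C d) :
    IsVCDim (ThrClass C) d := by
  constructor
  · exact (pshatters_iff_shatters C hC d).mp h.1
  · intro hs
    exact h.2 ((pshatters_iff_shatters C hC (d+1)).mpr hs)



noncomputable section

variable {X : Type u}

/-- The grid sample of binary labeled points derived from a real-valued sample. -/
def gridT (ε : ℝ) (N : ℕ) (S : List (X × ℝ)) : List ((X × ℝ) × Bool) :=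
  S.flatMap fun pr => (List.range N).map fun t : ℕ =>
    ((pr.1, ((t:ℝ)+1)*ε), decide (pr.2 ≤ ((t:ℝ)+1)*ε))

lemma mem_gridT {ε : ℝ} {N : ℕ} {S : List (X × ℝ)} {q : (X × ℝ) × Bool}
    (hq : q ∈ gridT ε N S) :
    ∃ u : (X × ℝ) × ℕ, u.1 ∈ S ∧ u.2 < N ∧
      q = ((u.1.1, ((u.2:ℝ)+1)*ε), decide (u.1.2 ≤ ((u.2:ℝ)+1)*ε)) := by
  obtain ⟨pr, hpr, hq2⟩ := List.mem_flatMap.mp hq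
  obtain ⟨t, ht, hq3⟩ := List.mem_map.mp hq2
  exact ⟨(pr, t), hpr, List.mem_range.mp ht, hq3.symm⟩

lemma gridT_mem {ε : ℝ} {N : ℕ} {S : List (X × ℝ)} {pr : X × ℝ} (hpr : pr ∈ S)
    {t : ℕ} (ht : t < N) :
    ((pr.1, ((t:ℝ)+1)*ε), decide (pr.2 ≤ ((t:ℝ)+1)*ε)) ∈ gridT ε N S := by
  exact List.mem_flatMap.mpr ⟨pr, hpr, List.mem_map.mpr ⟨t, List.mem_range.mpr ht, rfl⟩⟩

def pickU (ε : ℝ) (N : ℕ) (S : List (X × ℝ)) (q : (X × ℝ) × Bool)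
    (hq : q ∈ gridT ε N S) : (X × ℝ) × ℕ :=
  Classical.choose (mem_gridT hq)

lemma pickU_spec {ε : ℝ} {N : ℕ} {S : List (X × ℝ)} {q : (X × ℝ) × Bool}
    (hq : q ∈ gridT ε N S) :
    (pickU ε N S q hq).1 ∈ S ∧ (pickU ε N S q hq).2 < N ∧
      q = (((pickU ε N S q hq).1.1, (((pickU ε N S q hq).2:ℝ)+1)*ε),
        decide ((pickU ε N S q hq).1.2 ≤ (((pickU ε N S q hq).2:ℝ)+1)*ε)) :=
  Classical.choose_spec (mem_gridT hq)

variable (κ₀ : List ((X × ℝ) × Bool) → List ((X × ℝ) × Bool) × List Bool)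
variable (ρ₀ : List ((X × ℝ) × Bool) × List Bool → (X × ℝ) → Bool)

def selW (ε : ℝ) (N : ℕ) (hsub : ∀ S', (κ₀ S').1 ⊆ S') (S : List (X × ℝ)) :
    List ((X × ℝ) × ℕ) :=
  (κ₀ (gridT ε N S)).1.pmap (fun q hq => pickU ε N S q hq)
    (fun _ hq => hsub (gridT ε N S) hq)

def encK (ε : ℝ) (N B : ℕ) (hsub : ∀ S', (κ₀ S').1 ⊆ S') (S : List (X × ℝ)) :
    List (X × ℝ) × List Bool :=
  ((selW κ₀ ε N hsub S).map Prod.fst,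
    ((selW κ₀ ε N hsub S).flatMap fun u => natToBits B u.2) ++ (κ₀ (gridT ε N S)).2)

def decR (ε : ℝ) (N B : ℕ) (P : List (X × ℝ) × List Bool) (x : X) : ℝ :=
  max 0 (min 1 (ε * (((Finset.range N).filter fun t : ℕ =>
    ρ₀ ((P.1.zip ((List.range P.1.length).map fun i =>
          natFromBits ((P.2.drop (i*B)).take B))).map fun u =>
            ((u.1.1, ((u.2:ℝ)+1)*ε), decide (u.1.2 ≤ ((u.2:ℝ)+1)*ε)),
        P.2.drop (P.1.length*B)) (x, ((t:ℝ)+1)*ε) = false).card : ℝ)))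

lemma selW_map_eq (ε : ℝ) (N : ℕ) (hsub : ∀ S', (κ₀ S').1 ⊆ S') (S : List (X × ℝ)) :
    (selW κ₀ ε N hsub S).map
        (fun u : (X × ℝ) × ℕ => ((u.1.1, ((u.2:ℝ)+1)*ε), decide (u.1.2 ≤ ((u.2:ℝ)+1)*ε)))
      = (κ₀ (gridT ε N S)).1 := by
  rw [selW, List.map_pmap]
  have : ∀ q ∈ (κ₀ (gridT ε N S)).1, ∀ (h₁ h₂ : q ∈ gridT ε N S),
      (fun u : (X × ℝ) × ℕ => ((u.1.1, ((u.2:ℝ)+1)*ε), decide (u.1.2 ≤ ((u.2:ℝ)+1)*ε)))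
        (pickU ε N S q h₁) = q := by
    intro q _ h₁ _
    exact (pickU_spec h₁).2.2.symm
  have H₂ : ∀ a ∈ (κ₀ (gridT ε N S)).1, a ∈ gridT ε N S := fun a ha => hsub _ ha
  rw [List.pmap_congr_left (g := fun (a : (X × ℝ) × Bool) (_ : a ∈ gridT ε N S) => a)
    (H₂ := H₂) _ this]
  exact (List.pmap_eq_map (f := id) H₂).trans (List.map_id _)

/-- Key reconstruction: the decoder applied to the encoding recovers `ρ₀ (κ₀ (gridT ε N S))`. -/
lemma decR_encK (ε : ℝ) (N B : ℕ) (hNB : N ≤ 2 ^ B) (hsub : ∀ S', (κ₀ S').1 ⊆ S')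
    (S : List (X × ℝ)) (x : X) :
    decR ρ₀ ε N B (encK κ₀ ε N B hsub S) x
      = max 0 (min 1 (ε * (((Finset.range N).filter fun t : ℕ =>
          ρ₀ (κ₀ (gridT ε N S)) (x, ((t:ℝ)+1)*ε) = false).card : ℝ))) := by
  set w := selW κ₀ ε N hsub S with hw
  have hglen : ∀ u : (X × ℝ) × ℕ, (natToBits B u.2).length = B := fun u => length_natToBits B u.2
  have hP1 : (encK κ₀ ε N B hsub S).1 = w.map Prod.fst := rfl
  have hP2 : (encK κ₀ ε N B hsub S).2
      = (w.flatMap fun u => natToBits B u.2) ++ (κ₀ (gridT ε N S)).2 := rfl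
  have hlen : (encK κ₀ ε N B hsub S).1.length = w.length := by rw [hP1, List.length_map]
  have hwN : ∀ u ∈ w, u.2 < N := by
    intro u hu
    rw [hw, selW] at hu
    obtain ⟨q, hq, hpick⟩ := List.mem_pmap.mp hu
    rw [← hpick]
    exact (pickU_spec _).2.1
  -- the decoded indices equal the selected indices
  have hts : (List.range (encK κ₀ ε N B hsub S).1.length).map
      (fun i => natFromBits (((encK κ₀ ε N B hsub S).2.drop (i*B)).take B))
      = w.map Prod.snd := by
    apply List.ext_getElem
    · simp [hlen]
    · intro i h₁ h₂
      simp only [List.getElem_map, List.getElem_range]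
      have hi : i < w.length := by
        simpa [hlen] using h₁
      rw [hP2, blocks_extract B _ hglen w _ i hi]
      exact natFromBits_natToBits B _ (lt_of_lt_of_le (hwN _ (List.getElem_mem hi)) hNB)
  -- the reconstructed compressed sample equals (κ₀ (gridT ε N S)).1
  have hT' : ((encK κ₀ ε N B hsub S).1.zip
        ((List.range (encK κ₀ ε N B hsub S).1.length).map
          (fun i => natFromBits (((encK κ₀ ε N B hsub S).2.drop (i*B)).take B)))).map
        (fun u : (X × ℝ) × ℕ => ((u.1.1, ((u.2:ℝ)+1)*ε), decide (u.1.2 ≤ ((u.2:ℝ)+1)*ε)))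
      = (κ₀ (gridT ε N S)).1 := by
    rw [hts, hP1, List.zip_map', ← selW_map_eq κ₀ ε N hsub S, hw]
    simp
  have hrest : (encK κ₀ ε N B hsub S).2.drop ((encK κ₀ ε N B hsub S).1.length * B)
      = (κ₀ (gridT ε N S)).2 := by
    rw [hP2, hlen, drop_blocks B _ hglen]
  rw [decR, hT', hrest]

lemma linf_main {X : Type u} (C : Set (X → ℝ))
    (hC : ∀ g ∈ C, ∀ x, g x ∈ Set.Icc (0:ℝ) 1) (fd : ℕ)
    (κ₀ : List ((X × ℝ) × Bool) → List ((X × ℝ) × Bool) × List Bool)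
    (ρ₀ : List ((X × ℝ) × Bool) × List Bool → (X × ℝ) → Bool)
    (hs : IsExactRealizableScheme (ThrClass C) fd κ₀ ρ₀)
    (ε : ℝ) (hε0 : 0 < ε) (hε1 : ε < 1) :
    ∃ κ ρ, IsApproxLinfScheme C ((1 + (⌈Real.logb 2 (1/ε)⌉₊ + 1)) * fd) ε κ ρ := by
  classical
  obtain ⟨h0sub, h0size, h0exact⟩ := hs
  set B : ℕ := ⌈Real.logb 2 (1/ε)⌉₊ + 1 with hB
  set N : ℕ := ⌈1/ε⌉₊ with hN
  have hinv1 : (1:ℝ) ≤ 1/ε := by rw [le_div_iff₀ hε0]; linarith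
  have hNr : 1/ε ≤ (N:ℝ) := Nat.le_ceil _
  have hNε : 1 ≤ (N:ℝ) * ε := by
    have : (1/ε) * ε ≤ (N:ℝ) * ε := mul_le_mul_of_nonneg_right hNr hε0.le
    rwa [one_div, inv_mul_cancel₀ hε0.ne'] at this
  have hNB : N ≤ 2 ^ B := by
    have hc1 : (N:ℝ) < 1/ε + 1 := Nat.ceil_lt_add_one (by positivity)
    have hc2 : 1/ε + 1 ≤ 2 * (1/ε) := by linarith
    have hL : Real.logb 2 (1/ε) ≤ ((⌈Real.logb 2 (1/ε)⌉₊ : ℕ) : ℝ) := Nat.le_ceil _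
    have h2L : (1/ε : ℝ) ≤ (2:ℝ) ^ ((⌈Real.logb 2 (1/ε)⌉₊ : ℕ) : ℝ) := by
      calc (1/ε : ℝ) = (2:ℝ) ^ Real.logb 2 (1/ε) :=
            (Real.rpow_logb two_pos (by norm_num) (by positivity)).symm
        _ ≤ _ := Real.rpow_le_rpow_of_exponent_le one_le_two hL
    have h2B : (2:ℝ) * (1/ε) ≤ ((2:ℕ) ^ B : ℕ) := by
      push_cast
      rw [hB, pow_succ, ← Real.rpow_natCast 2 (⌈Real.logb 2 (1/ε)⌉₊)]
      nlinarith [Real.rpow_nonneg (le_of_lt two_pos : (0:ℝ) ≤ 2) ((⌈Real.logb 2 (1/ε)⌉₊ : ℕ) : ℝ)]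
    have : (N : ℝ) ≤ ((2 ^ B : ℕ) : ℝ) := by push_cast at h2B ⊢; linarith
    exact_mod_cast this
  have hreal : ∀ S : List (X × ℝ), Realizable C S → Realizable (ThrClass C) (gridT ε N S) := by
    intro S hS
    obtain ⟨c, hc, hcS⟩ := hS
    refine ⟨fun q => decide (c q.1 ≤ q.2), ⟨c, hc, rfl⟩, fun q hq => ?_⟩
    obtain ⟨u, hu1, hu2, hqe⟩ := mem_gridT hq
    rw [hqe]
    show decide (c u.1.1 ≤ ((u.2:ℝ)+1)*ε) = decide (u.1.2 ≤ ((u.2:ℝ)+1)*ε)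
    rw [hcS u.1 hu1]
  refine ⟨encK κ₀ ε N B h0sub, decR ρ₀ ε N B, ?_, ?_, ?_, ?_⟩
  · -- subset
    intro S a ha
    obtain ⟨u, hu, rfl⟩ := List.mem_map.mp ha
    obtain ⟨q, hq, hpick⟩ := List.mem_pmap.mp hu
    rw [← hpick]
    exact (pickU_spec _).1
  · -- range
    intro T x
    exact Set.mem_Icc.mpr ⟨le_max_left _ _, max_le zero_le_one (min_le_left _ _)⟩
  · -- size
    intro S hS
    have h0 := h0size _ (hreal S hS)
    set L := (κ₀ (gridT ε N S)).1.length with hL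
    set r := (κ₀ (gridT ε N S)).2.length with hr
    have hwlen : (selW κ₀ ε N h0sub S).length = L := List.length_pmap
    have h1 : (encK κ₀ ε N B h0sub S).1.length = L := by
      simp [encK, hwlen]
    have h2 : (encK κ₀ ε N B h0sub S).2.length = L * B + r := by
      simp only [encK, List.length_append]
      rw [length_flatMap_const B (fun u : (X × ℝ) × ℕ => natToBits B u.2)
        (fun u => length_natToBits B u.2), hwlen]
    rw [h1, h2]
    have h3 : L * B ≤ fd * B := Nat.mul_le_mul_right B (le_trans (Nat.le_add_right L r) h0)
    calc L + (L * B + r) = (L + r) + L * B := by omega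
      _ ≤ fd + fd * B := add_le_add h0 h3
      _ = (1 + B) * fd := by ring
  · -- accuracy
    intro S hS p hp
    have hkey := decR_encK κ₀ ρ₀ ε N B hNB h0sub S p.1
    show |decR ρ₀ ε N B (encK κ₀ ε N B h0sub S) p.1 - p.2| ≤ ε
    rw [hkey]
    have hex := h0exact _ (hreal S hS)
    have hfil : (Finset.range N).filter
          (fun t : ℕ => ρ₀ (κ₀ (gridT ε N S)) (p.1, ((t:ℝ)+1)*ε) = false)
        = (Finset.range N).filter (fun t : ℕ => ((t:ℝ)+1)*ε < p.2) := by
      apply Finset.filter_congr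
      intro t ht
      have hq : ρ₀ (κ₀ (gridT ε N S)) (p.1, ((t:ℝ)+1)*ε) = decide (p.2 ≤ ((t:ℝ)+1)*ε) :=
        hex _ (gridT_mem hp (Finset.mem_range.mp ht))
      rw [hq]
      simp [decide_eq_false_iff_not, not_le]
    rw [hfil]
    obtain ⟨c, hc, hcS⟩ := hS
    have hy : p.2 ∈ Set.Icc (0:ℝ) 1 := by rw [← hcS p hp]; exact hC c hc p.1
    obtain ⟨hlow, hhigh⟩ := count_grid p.2 ε N hε0 hy.1 hy.2 hNε
    have hm0 : 0 ≤ ε * (((Finset.range N).filter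
        (fun t : ℕ => ((t:ℝ)+1)*ε < p.2)).card : ℝ) := by positivity
    rw [min_eq_right (le_trans hhigh hy.2), max_eq_right hm0]
    rw [abs_le]
    constructor <;> linarith


lemma lp_of_linf {X : Type u} (C : Set (X → ℝ)) (k : ℕ) (p ε : ℝ)
    (hp : 1 ≤ p) (hε0 : 0 < ε)
    (κ : List (X × ℝ) → List (X × ℝ) × List Bool)
    (ρ : List (X × ℝ) × List Bool → X → ℝ)
    (h : IsApproxLinfScheme C k (ε ^ (1/p)) κ ρ) : IsApproxLpScheme C k p ε κ ρ := by
  obtain ⟨h1, h2, h3, h4⟩ := h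
  refine ⟨h1, h2, h3, fun S hS => ?_⟩
  have hbound : ∀ z ∈ S.map (fun q => |ρ (κ S) q.1 - q.2| ^ p), z ≤ ε := by
    intro z hz
    obtain ⟨q, hq, rfl⟩ := List.mem_map.mp hz
    have h5 := h4 S hS q hq
    calc |ρ (κ S) q.1 - q.2| ^ p ≤ (ε ^ (1/p)) ^ p :=
          Real.rpow_le_rpow (abs_nonneg _) h5 (by linarith)
      _ = ε := by
          rw [← Real.rpow_mul hε0.le, one_div, inv_mul_cancel₀
            (by linarith : p ≠ 0), Real.rpow_one]
  calc (S.map (fun q => |ρ (κ S) q.1 - q.2| ^ p)).sum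
      ≤ (S.map (fun q => |ρ (κ S) q.1 - q.2| ^ p)).length • ε :=
        List.sum_le_card_nsmul _ ε hbound
    _ = ε * S.length := by rw [List.length_map, nsmul_eq_mul, mul_comm]

lemma size_bound (fd : ℕ) (L : ℝ) (hL : 0 ≤ L) :
    (((1 + (⌈L⌉₊ + 1)) * fd : ℕ) : ℝ) ≤ 3 * fd * (1 + L) := by
  have h1 : (⌈L⌉₊ : ℝ) < L + 1 := Nat.ceil_lt_add_one hL
  push_cast
  nlinarith [Nat.cast_nonneg (α := ℝ) fd]

end


theorem regression_approx_compression_of_binary (f : ℕ → ℕ)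
    (hbin : ∀ (X' : Type u) (H : Set (X' → Bool)) (d : ℕ), IsVCDim H d →
      ∃ κ ρ, IsExactRealizableScheme H (f d) κ ρ) :
    ∃ c : ℝ, 0 < c ∧
      ∀ (X : Type u) (C : Set (X → ℝ)),
        (∀ g ∈ C, ∀ x, g x ∈ Set.Icc (0:ℝ) 1) →
        ∀ dP : ℕ, IsPseudoDim C dP →
        ∀ ε : ℝ, 0 < ε → ε < 1 →
          (∃ k : ℕ, (k : ℝ) ≤ c * f dP * (1 + Real.logb 2 (1 / ε)) ∧
            ∃ κ ρ, IsApproxLinfScheme C k ε κ ρ) ∧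
          (∀ p : ℝ, 1 ≤ p →
            ∃ k : ℕ, (k : ℝ) ≤ c * f dP * (1 + (1 / p) * Real.logb 2 (1 / ε)) ∧
              ∃ κ ρ, IsApproxLpScheme C k p ε κ ρ) := by
  refine ⟨3, by norm_num, ?_⟩
  intro X C hC dP hPD ε hε0 hε1
  obtain ⟨κ₀, ρ₀, hs⟩ := hbin (X × ℝ) (ThrClass C) dP (vc_of_pseudo C hC dP hPD)
  have hinv1 : (1:ℝ) ≤ 1/ε := by rw [le_div_iff₀ hε0]; linarith
  constructor
  · obtain ⟨κ, ρ, hscheme⟩ := linf_main C hC (f dP) κ₀ ρ₀ hs ε hε0 hε1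
    exact ⟨_, size_bound (f dP) _ (Real.logb_nonneg one_lt_two hinv1), κ, ρ, hscheme⟩
  · intro p hp
    have hp0 : 0 < p := lt_of_lt_of_le one_pos hp
    have hε'0 : 0 < ε ^ (1/p) := Real.rpow_pos_of_pos hε0 _
    have hε'1 : ε ^ (1/p) < 1 := Real.rpow_lt_one hε0.le hε1 (by positivity)
    obtain ⟨κ, ρ, hscheme⟩ := linf_main C hC (f dP) κ₀ ρ₀ hs (ε ^ (1/p)) hε'0 hε'1
    refine ⟨_, ?_, κ, ρ, lp_of_linf C _ p ε hp hε0 κ ρ hscheme⟩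
    have hlogeq : Real.logb 2 (1/(ε ^ (1/p))) = (1/p) * Real.logb 2 (1/ε) := by
      rw [one_div, one_div, ← Real.inv_rpow hε0.le, Real.logb, Real.logb,
        Real.log_rpow (by positivity)]
      ring_nf
    rw [hlogeq]
    exact size_bound (f dP) _
      (mul_nonneg (by positivity) (Real.logb_nonneg one_lt_two hinv1))
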